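/- Eventwise decoupling of support discovery (Corollary): fix an event ℓ, assume event ℓ has strict overround ∑_i π ℓ i > 1 and pairwise distinct edge ratios (i ≠ j implies p ℓ i / π ℓ i ≠ p ℓ j / π ℓ j). Let U be admissible and let (c, g) be a feasible portfolio of the simultaneous multi-event problem with c > 0 maximizing ∑_x Pr(x)·U(W(x)) over all feasible portfolios. Let V be admissible and let (c₀, h) be a feasible portfolio of the single-event problem with data (p ℓ ·, π ℓ ·) with c₀ > 0 maximizing ∑_i p ℓ i · V(c₀ + h i) over all single-event feasible portfolios. Then {i : g ℓ i > 0} = {i : h i > 0}; i.e., the exact active support of event ℓ in the simultaneous problem equals the single-event support, so the simultaneous support is the eventwise union of the single-event supports. -/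

import Mathlib

open Finset

/-- Probability of a product state `x`. -/
def prodProb {m : ℕ} {n : Fin m → ℕ} (p : ∀ ℓ, Fin (n ℓ) → ℝ)
    (x : ∀ ℓ, Fin (n ℓ)) : ℝ :=
  ∏ ℓ, p ℓ (x ℓ)

/-- Terminal wealth of the portfolio `(c, g)` in product state `x`. -/
def wealth {m : ℕ} {n : Fin m → ℕ} (c : ℝ) (g : ∀ ℓ, Fin (n ℓ) → ℝ)
    (x : ∀ ℓ, Fin (n ℓ)) : ℝ :=
  c + ∑ ℓ, g ℓ (x ℓ)

/-- Probability of a reduced state `y` (a state of all events other than `ℓ`). -/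
def redProb {m : ℕ} {n : Fin m → ℕ} (p : ∀ ℓ, Fin (n ℓ) → ℝ) (ℓ : Fin m)
    (y : ∀ r : {r : Fin m // r ≠ ℓ}, Fin (n r.1)) : ℝ :=
  ∏ r, p r.1 (y r)

/-- Background wealth `R_ℓ(y)` from all events other than `ℓ`. -/
def background {m : ℕ} {n : Fin m → ℕ} (c : ℝ) (g : ∀ ℓ, Fin (n ℓ) → ℝ) (ℓ : Fin m)
    (y : ∀ r : {r : Fin m // r ≠ ℓ}, Fin (n r.1)) : ℝ :=
  c + ∑ r, g r.1 (y r)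

/-- Reduced expectation `E₋ℓ[h]` over reduced states of event `ℓ`. -/
def Eminus {m : ℕ} {n : Fin m → ℕ} (p : ∀ ℓ, Fin (n ℓ) → ℝ) (ℓ : Fin m)
    (h : (∀ r : {r : Fin m // r ≠ ℓ}, Fin (n r.1)) → ℝ) : ℝ :=
  ∑ y, redProb p ℓ y * h y

/-- Feasibility: nonnegative cash and wagers, unit budget, positive wealth in every state. -/
def Feasible {m : ℕ} {n : Fin m → ℕ} (π : ∀ ℓ, Fin (n ℓ) → ℝ)
    (c : ℝ) (g : ∀ ℓ, Fin (n ℓ) → ℝ) : Prop :=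
  0 ≤ c ∧ (∀ ℓ i, 0 ≤ g ℓ i) ∧ (c + ∑ ℓ, ∑ i, π ℓ i * g ℓ i = 1) ∧
    ∀ x, 0 < wealth c g x

/-- The wagers `g` are supported on the support family `A`. -/
def SupportedOn {m : ℕ} {n : Fin m → ℕ} (A : ∀ ℓ, Finset (Fin (n ℓ)))
    (g : ∀ ℓ, Fin (n ℓ) → ℝ) : Prop :=
  ∀ ℓ i, (i ∈ A ℓ → 0 < g ℓ i) ∧ (i ∉ A ℓ → g ℓ i = 0)

/-- `U` is an admissible utility with derivative `U'`. -/
def Admissible (U U' : ℝ → ℝ) : Prop :=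
  (∀ w : ℝ, 0 < w → HasDerivAt U (U' w) w) ∧ (∀ w : ℝ, 0 < w → 0 < U' w) ∧
    StrictAntiOn U' (Set.Ioi 0)

/-- Single-event feasibility for the single-event problem of one event. -/
def FeasibleSingle {k : ℕ} (π : Fin k → ℝ) (c₀ : ℝ) (h : Fin k → ℝ) : Prop :=
  0 ≤ c₀ ∧ (∀ i, 0 ≤ h i) ∧ (c₀ + ∑ i, π i * h i = 1) ∧ ∀ i, 0 < c₀ + h i


lemma deriv_nonpos_of_right_max (φ : ℝ → ℝ) (d δ : ℝ) (hδ : 0 < δ)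
    (hd : HasDerivAt φ d 0)
    (hmax : ∀ ε : ℝ, 0 < ε → ε < δ → φ ε ≤ φ 0) : d ≤ 0 := by
  have h1 : HasDerivWithinAt φ d (Set.Ioi 0) 0 := hd.hasDerivWithinAt
  rw [hasDerivWithinAt_iff_tendsto_slope] at h1
  have hset : (Set.Ioi (0:ℝ)) \ {0} = Set.Ioi 0 := by
    simp [Set.diff_singleton_eq_self]
  rw [hset] at h1
  refine le_of_tendsto h1 ?_
  filter_upwards [Ioo_mem_nhdsGT_of_mem (Set.left_mem_Ico.2 hδ)] with ε hε
  have hε0 : 0 < ε := hε.1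
  have hs : slope φ 0 ε = (φ ε - φ 0) / ε := by
    simp [slope_def_field]
  rw [hs]
  exact div_nonpos_of_nonpos_of_nonneg (sub_nonpos.2 (hmax ε hε.1 hε.2)) hε0.le

lemma kkt {k : ℕ} (p π : Fin k → ℝ) (hp : ∀ i, 0 < p i) (hπ : ∀ i, 0 < π i)
    (G G' : ℝ → ℝ) (hG : ∀ w : ℝ, 0 < w → HasDerivAt G (G' w) w)
    (b c₀ : ℝ) (h : Fin k → ℝ) (hc₀ : 0 < c₀) (hh : ∀ i, 0 ≤ h i)
    (hbud : c₀ + ∑ i, π i * h i = b)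
    (hopt : ∀ c₁ : ℝ, ∀ h₁ : Fin k → ℝ, 0 ≤ c₁ → (∀ i, 0 ≤ h₁ i) →
      c₁ + ∑ i, π i * h₁ i = b → (∀ i, 0 < c₁ + h₁ i) →
      ∑ i, p i * G (c₁ + h₁ i) ≤ ∑ i, p i * G (c₀ + h i)) :
    ∀ i, p i * G' (c₀ + h i) ≤ (∑ j, p j * G' (c₀ + h j)) * π i ∧
      (0 < h i → p i * G' (c₀ + h i) = (∑ j, p j * G' (c₀ + h j)) * π i) := by
  intro i
  have hw : ∀ j, 0 < c₀ + h j := fun j => by have := hh j; linarith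
  set dd : Fin k → ℝ := fun j => (if j = i then 1 else 0) - π i with hdd
  set φ : ℝ → ℝ := fun ε => ∑ j, p j * G (c₀ + h j + dd j * ε) with hφ
  set D : ℝ := p i * G' (c₀ + h i) - (∑ j, p j * G' (c₀ + h j)) * π i with hD
  have hderiv : HasDerivAt φ D 0 := by
    have h1 : HasDerivAt φ (∑ j, p j * (G' (c₀ + h j) * dd j)) 0 := by
      apply HasDerivAt.fun_sum
      intro j _
      have hin : HasDerivAt (fun ε : ℝ => c₀ + h j + dd j * ε) (dd j) 0 := by
        simpa using ((hasDerivAt_id (0:ℝ)).const_mul (dd j)).const_add (c₀ + h j)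
      have hg' : HasDerivAt G (G' (c₀ + h j)) (c₀ + h j + dd j * 0) := by
        simpa using hG _ (hw j)
      have hout : HasDerivAt (fun ε : ℝ => G (c₀ + h j + dd j * ε))
          (G' (c₀ + h j) * dd j) 0 := by
        have h3 := hg'.comp 0 hin
        exact h3
      exact hout.const_mul (p j)
    have he : (∑ j, p j * (G' (c₀ + h j) * dd j)) = D := by
      rw [hD, hdd]
      simp only [mul_sub, mul_ite, mul_one, mul_zero]
      rw [Finset.sum_sub_distrib, Finset.sum_mul]
      congr 1
      · rw [Finset.sum_ite_eq' univ i (fun j => p j * G' (c₀ + h j))]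
        simp
      · apply Finset.sum_congr rfl; intro j _; ring
    rwa [he] at h1
  have hfeasε : ∀ ε : ℝ, 0 < c₀ - π i * ε → (∀ j, 0 ≤ h j + (if j = i then ε else 0)) →
      φ ε ≤ φ 0 := by
    intro ε hcε hhε
    have hb : (c₀ - π i * ε) + ∑ j, π j * (h j + (if j = i then ε else 0)) = b := by
      have he2 : ∑ j, π j * (h j + (if j = i then ε else 0))
          = (∑ j, π j * h j) + π i * ε := by
        simp only [mul_add, Finset.sum_add_distrib, mul_ite, mul_zero]
        rw [Finset.sum_ite_eq' univ i (fun j => π j * ε)]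
        simp
      rw [he2]; linarith
    have key := hopt (c₀ - π i * ε) (fun j => h j + (if j = i then ε else 0))
      hcε.le hhε hb (fun j => by
        show 0 < c₀ - π i * ε + (h j + if j = i then ε else 0)
        have := hhε j; linarith)
    have e0 : φ 0 = ∑ j, p j * G (c₀ + h j) := by
      rw [hφ]; simp
    have eε : φ ε = ∑ j, p j * G ((c₀ - π i * ε) + (h j + (if j = i then ε else 0))) := by
      rw [hφ]
      apply Finset.sum_congr rfl
      intro j _
      congr 1
      rw [hdd]
      by_cases hj : j = i <;> simp [hj] <;> ring
    rw [e0, eε]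
    exact key
  have hle : D ≤ 0 := by
    apply deriv_nonpos_of_right_max φ _ (c₀ / π i) (div_pos hc₀ (hπ i)) hderiv
    intro ε hε hεδ
    apply hfeasε
    · have := (lt_div_iff₀ (hπ i)).1 hεδ; nlinarith
    · intro j; by_cases hj : j = i
      · subst hj; rw [if_pos rfl]; have := hh j; linarith
      · rw [if_neg hj]; simpa using hh j
  refine ⟨by rw [hD] at hle; linarith, ?_⟩
  intro hhi
  have hneg : HasDerivAt (fun ε : ℝ => φ (-ε)) (-D) 0 := by
    have h2 : HasDerivAt φ D (-0 : ℝ) := by simpa using hderiv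
    have h3 := h2.comp 0 (hasDerivAt_neg (0:ℝ))
    have h4 : HasDerivAt (fun ε : ℝ => φ (-ε)) (D * -1) 0 := h3
    simpa using h4
  have hge : -D ≤ 0 := by
    apply deriv_nonpos_of_right_max _ _ (h i) hhi hneg
    intro ε hε hεδ
    show φ (-ε) ≤ φ (-0)
    rw [neg_zero]
    apply hfeasε
    · nlinarith [hπ i]
    · intro j; by_cases hj : j = i
      · subst hj; rw [if_pos rfl]; linarith
      · rw [if_neg hj]; simpa using hh j
  have hD0 : D = 0 := le_antisymm hle (by linarith)
  rw [hD] at hD0; linarith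

lemma support_char {k : ℕ} (p π : Fin k → ℝ) (hp : ∀ i, 0 < p i) (hπ : ∀ i, 0 < π i)
    (hover : 1 < ∑ i, π i)
    (G G' : ℝ → ℝ) (hG : ∀ w : ℝ, 0 < w → HasDerivAt G (G' w) w)
    (hG'pos : ∀ w : ℝ, 0 < w → 0 < G' w) (hanti : StrictAntiOn G' (Set.Ioi 0))
    (b c₀ : ℝ) (h : Fin k → ℝ) (hc₀ : 0 < c₀) (hh : ∀ i, 0 ≤ h i)
    (hbud : c₀ + ∑ i, π i * h i = b)
    (hopt : ∀ c₁ : ℝ, ∀ h₁ : Fin k → ℝ, 0 ≤ c₁ → (∀ i, 0 ≤ h₁ i) →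
      c₁ + ∑ i, π i * h₁ i = b → (∀ i, 0 < c₁ + h₁ i) →
      ∑ i, p i * G (c₁ + h₁ i) ≤ ∑ i, p i * G (c₀ + h i)) :
    ∃ t : ℝ, (∀ i, 0 < h i ↔ t < p i / π i) ∧
      (∑ i ∈ (univ.filter (fun i => 0 < h i))ᶜ, p i
        = t * (1 - ∑ i ∈ univ.filter (fun i => 0 < h i), π i)) ∧
      (∑ i ∈ univ.filter (fun i => 0 < h i), π i) < 1 := by
  classical
  have hK := kkt p π hp hπ G G' hG b c₀ h hc₀ hh hbud hopt
  have hw : ∀ j, 0 < c₀ + h j := fun j => by have := hh j; linarith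
  have hne : (univ : Finset (Fin k)).Nonempty := by
    rcases (univ : Finset (Fin k)).eq_empty_or_nonempty with he | hne
    · rw [he] at hover; simp at hover; linarith
    · exact hne
  set lam : ℝ := ∑ j, p j * G' (c₀ + h j) with hlam
  have hlampos : 0 < lam := Finset.sum_pos (fun j _ => mul_pos (hp j) (hG'pos _ (hw j))) hne
  have hGc₀ : 0 < G' c₀ := hG'pos c₀ hc₀
  set t : ℝ := lam / G' c₀ with ht
  have htpos : 0 < t := div_pos hlampos hGc₀
  set S : Finset (Fin k) := univ.filter (fun i => 0 < h i) with hS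
  have hiff : ∀ i, 0 < h i ↔ t < p i / π i := by
    intro i
    constructor
    · intro hi
      have heq := (hK i).2 hi
      have hlt : G' (c₀ + h i) < G' c₀ := by
        apply hanti (Set.mem_Ioi.2 hc₀) (Set.mem_Ioi.2 (hw i))
        linarith
      have hlt2 : lam * π i < p i * G' c₀ := by
        rw [← heq] at *
        nlinarith [hp i]
      rw [ht, div_lt_div_iff₀ hGc₀ (hπ i)]
      linarith
    · intro hti
      by_contra hnot
      have hi0 : h i = 0 := le_antisymm (not_lt.1 hnot) (hh i)
      have hle := (hK i).1
      rw [hi0, add_zero] at hle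
      rw [ht, div_lt_div_iff₀ hGc₀ (hπ i)] at hti
      linarith
  have heqn : ∑ i ∈ Sᶜ, p i = t * (1 - ∑ i ∈ S, π i) := by
    have hsplit : lam = ∑ i ∈ S, (lam * π i) + ∑ i ∈ Sᶜ, p i * G' c₀ := by
      conv_lhs => rw [hlam, ← Finset.sum_add_sum_compl S (fun j => p j * G' (c₀ + h j))]
      congr 1
      · apply Finset.sum_congr rfl
        intro j hj
        rw [hS, Finset.mem_filter] at hj
        exact ((hK j).2 hj.2).trans (by ring)
      · apply Finset.sum_congr rfl
        intro j hj
        rw [hS, Finset.compl_filter, Finset.mem_filter] at hj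
        have : h j = 0 := le_antisymm (not_lt.1 hj.2) (hh j)
        rw [this, add_zero]
    have e1 : ∑ i ∈ S, (lam * π i) = lam * ∑ i ∈ S, π i := by
      rw [Finset.mul_sum]
    have e2 : ∑ i ∈ Sᶜ, p i * G' c₀ = G' c₀ * ∑ i ∈ Sᶜ, p i := by
      rw [Finset.mul_sum]
      exact Finset.sum_congr rfl fun j _ => mul_comm _ _
    have h2 := hsplit
    rw [e1, e2] at h2
    have h3 : G' c₀ * ∑ i ∈ Sᶜ, p i = lam * (1 - ∑ i ∈ S, π i) := by linarith
    rw [ht]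
    field_simp
    linarith [h3]
  refine ⟨t, hiff, heqn, ?_⟩
  by_contra hPi
  push_neg at hPi
  have h1 : ∑ i ∈ Sᶜ, p i ≤ 0 := by
    rw [heqn]
    apply mul_nonpos_of_nonneg_of_nonpos htpos.le
    linarith
  have h2 : (0:ℝ) ≤ ∑ i ∈ Sᶜ, p i := Finset.sum_nonneg (fun i _ => (hp i).le)
  have hq0 : ∑ i ∈ Sᶜ, p i = 0 := le_antisymm h1 h2
  have hSc : Sᶜ = ∅ := by
    by_contra hScne
    rcases Finset.nonempty_of_ne_empty hScne with ⟨j, hj⟩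
    have : 0 < ∑ i ∈ Sᶜ, p i := Finset.sum_pos' (fun i _ => (hp i).le) ⟨j, hj, hp j⟩
    linarith
  have hSuniv : S = univ := (Finset.compl_eq_empty_iff S).1 hSc
  have : (1 : ℝ) - ∑ i ∈ S, π i = 0 := by
    rcases mul_eq_zero.1 (hq0 ▸ heqn).symm with ht0 | h0
    · exact absurd ht0 (ne_of_gt htpos)
    · exact h0
  rw [hSuniv] at this
  linarith

lemma support_unique_aux {k : ℕ} (p π : Fin k → ℝ) (hπ : ∀ i, 0 < π i)
    (S T : Finset (Fin k)) (t s : ℝ)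
    (hS : ∀ i, i ∈ S ↔ t < p i / π i) (hT : ∀ i, i ∈ T ↔ s < p i / π i)
    (heS : ∑ i ∈ Sᶜ, p i = t * (1 - ∑ i ∈ S, π i))
    (heT : ∑ i ∈ Tᶜ, p i = s * (1 - ∑ i ∈ T, π i))
    (hbT : ∑ i ∈ T, π i < 1) (hst : s < t) : False := by
  classical
  have hsub : S ⊆ T := by
    intro i hi
    rw [hT]
    exact lt_trans hst ((hS i).1 hi)
  have hDkey : ∀ j ∈ T \ S, p j ≤ t * π j := by
    intro j hj
    rw [Finset.mem_sdiff] at hj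
    have : ¬ t < p j / π j := by rw [← hS]; exact hj.2
    rw [not_lt, div_le_iff₀ (hπ j)] at this
    linarith [this]
  have hP : ∑ j ∈ T \ S, p j ≤ t * ∑ j ∈ T \ S, π j := by
    rw [Finset.mul_sum]
    exact Finset.sum_le_sum hDkey
  have hπsum : ∑ j ∈ T \ S, π j + ∑ j ∈ S, π j = ∑ j ∈ T, π j :=
    Finset.sum_sdiff hsub
  have hcompl : Sᶜ \ Tᶜ = T \ S := by
    ext i; simp only [Finset.mem_sdiff, Finset.mem_compl]; tauto
  have hpsum : ∑ j ∈ T \ S, p j + ∑ j ∈ Tᶜ, p j = ∑ j ∈ Sᶜ, p j := by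
    rw [← hcompl]
    exact Finset.sum_sdiff (Finset.compl_subset_compl.2 hsub)
  have e3 : t * (1 - ∑ j ∈ S, π j) - t * ∑ j ∈ T \ S, π j
      = t * (1 - ∑ j ∈ T, π j) := by
    rw [← hπsum]; ring
  have e4 : s * (1 - ∑ j ∈ T, π j) < t * (1 - ∑ j ∈ T, π j) :=
    mul_lt_mul_of_pos_right hst (by linarith)
  linarith

lemma sum_split_fin {m : ℕ} (ℓ : Fin m) (f : Fin m → ℝ) :
    ∑ r, f r = f ℓ + ∑ r : {r : Fin m // r ≠ ℓ}, f r.1 := by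
  rw [← Finset.add_sum_erase univ f (Finset.mem_univ ℓ)]
  congr 1
  exact Finset.sum_subtype (univ.erase ℓ) (by simp [Finset.mem_erase]) f

lemma prod_split_fin {m : ℕ} (ℓ : Fin m) (f : Fin m → ℝ) :
    ∏ r, f r = f ℓ * ∏ r : {r : Fin m // r ≠ ℓ}, f r.1 := by
  rw [← Finset.mul_prod_erase univ f (Finset.mem_univ ℓ)]
  congr 1
  exact Finset.prod_subtype (univ.erase ℓ) (by simp [Finset.mem_erase]) f

lemma piSplitAt_symm_same {m : ℕ} {n : Fin m → ℕ} (ℓ : Fin m) (i : Fin (n ℓ))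
    (y : ∀ r : {r : Fin m // r ≠ ℓ}, Fin (n r.1)) :
    ((Equiv.piSplitAt ℓ (fun r => Fin (n r))).symm (i, y)) ℓ = i := by
  simp [Equiv.piSplitAt_symm_apply]

lemma piSplitAt_symm_ne {m : ℕ} {n : Fin m → ℕ} (ℓ : Fin m) (i : Fin (n ℓ))
    (y : ∀ r : {r : Fin m // r ≠ ℓ}, Fin (n r.1)) (r : {r : Fin m // r ≠ ℓ}) :
    ((Equiv.piSplitAt ℓ (fun r => Fin (n r))).symm (i, y)) r.1 = y r := by
  simp [Equiv.piSplitAt_symm_apply, r.2]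

lemma obj_split {m : ℕ} {n : Fin m → ℕ} (p : ∀ ℓ, Fin (n ℓ) → ℝ) (ℓ : Fin m)
    (F : ℝ → ℝ) (c' : ℝ) (g' : ∀ r, Fin (n r) → ℝ) :
    ∑ x, prodProb p x * F (wealth c' g' x)
      = ∑ i, p ℓ i * ∑ y, redProb p ℓ y *
          F ((∑ r : {r : Fin m // r ≠ ℓ}, g' r.1 (y r)) + (c' + g' ℓ i)) := by
  classical
  rw [← Equiv.sum_comp (Equiv.piSplitAt ℓ (fun r => Fin (n r))).symm
      (fun x => prodProb p x * F (wealth c' g' x)), Fintype.sum_prod_type]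
  apply Finset.sum_congr rfl
  intro i _
  rw [Finset.mul_sum]
  apply Finset.sum_congr rfl
  intro y _
  have hxl := piSplitAt_symm_same ℓ i y
  have hxr := piSplitAt_symm_ne ℓ i y
  set x := (Equiv.piSplitAt ℓ (fun r => Fin (n r))).symm (i, y) with hx
  have h1 : prodProb p x = p ℓ i * redProb p ℓ y := by
    rw [prodProb, redProb, prod_split_fin ℓ (fun r => p r (x r)), hxl]
    congr 1
    exact Finset.prod_congr rfl fun r _ => by rw [hxr r]
  have h2 : wealth c' g' x
      = (∑ r : {r : Fin m // r ≠ ℓ}, g' r.1 (y r)) + (c' + g' ℓ i) := by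
    rw [wealth, sum_split_fin ℓ (fun r => g' r (x r)), hxl]
    have e : ∑ r : {r : Fin m // r ≠ ℓ}, g' r.1 (x r.1)
        = ∑ r : {r : Fin m // r ≠ ℓ}, g' r.1 (y r) :=
      Finset.sum_congr rfl fun r _ => by rw [hxr r]
    rw [e]; ring
  rw [h1, h2]; ring

/-- eventwise decoupling of support discovery: under strict overround
and pairwise-distinct edge ratios for event `ℓ`, the active support of event `ℓ` in
the simultaneous multi-event problem (with admissible utility `U`) equals the active
support of the single-event problem for event `ℓ` (with admissible utility `V`). -/
theorem eventwise_decoupling {m : ℕ} (n : Fin m → ℕ)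
    (p π : ∀ ℓ, Fin (n ℓ) → ℝ) (hm : 1 ≤ m)
    (hp : ∀ ℓ i, 0 < p ℓ i) (hpsum : ∀ ℓ, ∑ i, p ℓ i = 1)
    (hπ : ∀ ℓ i, 0 < π ℓ i)
    (ℓ : Fin m)
    (hover : 1 < ∑ i, π ℓ i)
    (hdistinct : ∀ i j : Fin (n ℓ), i ≠ j → p ℓ i / π ℓ i ≠ p ℓ j / π ℓ j)
    (U Uder : ℝ → ℝ) (hU : Admissible U Uder)
    (c : ℝ) (g : ∀ r, Fin (n r) → ℝ)
    (hfeas : Feasible π c g) (hc : 0 < c)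
    (hopt : ∀ c₁ : ℝ, ∀ g₁ : ∀ r, Fin (n r) → ℝ, Feasible π c₁ g₁ →
      ∑ x, prodProb p x * U (wealth c₁ g₁ x) ≤ ∑ x, prodProb p x * U (wealth c g x))
    (V Vder : ℝ → ℝ) (hV : Admissible V Vder)
    (c₀ : ℝ) (h : Fin (n ℓ) → ℝ)
    (hfeas₀ : FeasibleSingle (π ℓ) c₀ h) (hc₀ : 0 < c₀)
    (hopt₀ : ∀ c₁ : ℝ, ∀ h₁ : Fin (n ℓ) → ℝ, FeasibleSingle (π ℓ) c₁ h₁ →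
      ∑ i, p ℓ i * V (c₁ + h₁ i) ≤ ∑ i, p ℓ i * V (c₀ + h i)) :
    ∀ i : Fin (n ℓ), 0 < g ℓ i ↔ 0 < h i := by
  classical
  -- every event has at least one outcome
  have hn : ∀ r : Fin m, 0 < n r := by
    intro r
    by_contra hr
    push_neg at hr
    have h0 : n r = 0 := Nat.le_zero.mp hr
    haveI : IsEmpty (Fin (n r)) := by rw [h0]; infer_instance
    have := hpsum r
    rw [Finset.univ_eq_empty, Finset.sum_empty] at this
    norm_num at this
  have hYne : (univ : Finset (∀ r : {r : Fin m // r ≠ ℓ}, Fin (n r.1))).Nonempty :=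
    ⟨fun r => ⟨0, hn r.1⟩, Finset.mem_univ _⟩
  obtain ⟨hc_nonneg, hgnn, hbudget, hwpos⟩ := hfeas
  obtain ⟨hc₀nn, hhnn, hbud₀, hwpos₀⟩ := hfeas₀
  -- reduced data for the multi-event problem
  set Bg : (∀ r : {r : Fin m // r ≠ ℓ}, Fin (n r.1)) → ℝ :=
    fun y => ∑ r, g r.1 (y r) with hBgdef
  have hred : ∀ y, 0 < redProb p ℓ y :=
    fun y => Finset.prod_pos fun r _ => hp r.1 (y r)
  have hBg : ∀ y, 0 ≤ Bg y := fun y => Finset.sum_nonneg fun r _ => hgnn r.1 (y r)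
  set G : ℝ → ℝ := fun w => ∑ y, redProb p ℓ y * U (Bg y + w) with hGdef
  set G' : ℝ → ℝ := fun w => ∑ y, redProb p ℓ y * Uder (Bg y + w) with hG'def
  have hGder : ∀ w : ℝ, 0 < w → HasDerivAt G (G' w) w := by
    intro w hw
    apply HasDerivAt.fun_sum
    intro y _
    have hin : HasDerivAt (fun w : ℝ => Bg y + w) 1 w :=
      (hasDerivAt_id w).const_add (Bg y)
    have hout : HasDerivAt U (Uder (Bg y + w)) (Bg y + w) :=
      hU.1 _ (by have := hBg y; linarith)
    have h3 := hout.comp w hin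
    simpa [Function.comp] using h3.const_mul (redProb p ℓ y)
  have hG'pos : ∀ w : ℝ, 0 < w → 0 < G' w := by
    intro w hw
    exact Finset.sum_pos
      (fun y _ => mul_pos (hred y) (hU.2.1 _ (by have := hBg y; linarith))) hYne
  have hGanti : StrictAntiOn G' (Set.Ioi 0) := by
    intro a ha b hb hab
    apply Finset.sum_lt_sum_of_nonempty hYne
    intro y _
    apply mul_lt_mul_of_pos_left _ (hred y)
    exact hU.2.2 (Set.mem_Ioi.2 (by have := hBg y; have := Set.mem_Ioi.1 ha; linarith))
      (Set.mem_Ioi.2 (by have := hBg y; have := Set.mem_Ioi.1 hb; linarith))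
      (by linarith)
  -- optimality of (c, g ℓ) for the reduced single-event problem with budget b
  set b : ℝ := c + ∑ i, π ℓ i * g ℓ i with hbdef
  have hoptG : ∀ c₁ : ℝ, ∀ h₁ : Fin (n ℓ) → ℝ, 0 ≤ c₁ → (∀ i, 0 ≤ h₁ i) →
      c₁ + ∑ i, π ℓ i * h₁ i = b → (∀ i, 0 < c₁ + h₁ i) →
      ∑ i, p ℓ i * G (c₁ + h₁ i) ≤ ∑ i, p ℓ i * G (c + g ℓ i) := by
    intro c₁ h₁ hc₁ hh₁ hb₁ hw₁
    set g₁ : ∀ r, Fin (n r) → ℝ := Function.update g ℓ h₁ with hg₁def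
    have hg₁ℓ : g₁ ℓ = h₁ := Function.update_self ℓ h₁ g
    have hg₁ne : ∀ r : {r : Fin m // r ≠ ℓ}, g₁ r.1 = g r.1 :=
      fun r => Function.update_of_ne r.2 h₁ g
    have hfeas₁ : Feasible π c₁ g₁ := by
      refine ⟨hc₁, ?_, ?_, ?_⟩
      · intro r i
        by_cases hr : r = ℓ
        · subst hr; rw [hg₁ℓ]; exact hh₁ i
        · rw [hg₁ne ⟨r, hr⟩]; exact hgnn r i
      · rw [sum_split_fin ℓ (fun r => ∑ i, π r i * g₁ r i)]
        rw [sum_split_fin ℓ (fun r => ∑ i, π r i * g r i)] at hbudget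
        have e : ∑ r : {r : Fin m // r ≠ ℓ}, ∑ i, π r.1 i * g₁ r.1 i
            = ∑ r : {r : Fin m // r ≠ ℓ}, ∑ i, π r.1 i * g r.1 i :=
          Finset.sum_congr rfl fun r _ => by rw [hg₁ne r]
        rw [e, hg₁ℓ]
        linarith
      · intro x
        rw [wealth, sum_split_fin ℓ (fun r => g₁ r (x r))]
        have e : (0:ℝ) ≤ ∑ r : {r : Fin m // r ≠ ℓ}, g₁ r.1 (x r.1) := by
          apply Finset.sum_nonneg
          intro r _
          rw [hg₁ne r]
          exact hgnn r.1 (x r.1)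
        rw [hg₁ℓ]
        have := hw₁ (x ℓ)
        linarith
    have key := hopt c₁ g₁ hfeas₁
    have e₁ : ∑ x, prodProb p x * U (wealth c₁ g₁ x)
        = ∑ i, p ℓ i * G (c₁ + h₁ i) := by
      rw [obj_split p ℓ U c₁ g₁]
      apply Finset.sum_congr rfl
      intro i _
      rw [hg₁ℓ]
      congr 1
      apply Finset.sum_congr rfl
      intro y _
      have eB : ∑ r : {r : Fin m // r ≠ ℓ}, g₁ r.1 (y r) = Bg y :=
        Finset.sum_congr rfl fun r _ => by rw [hg₁ne r]
      rw [eB]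
    have e₂ : ∑ x, prodProb p x * U (wealth c g x)
        = ∑ i, p ℓ i * G (c + g ℓ i) := by
      rw [obj_split p ℓ U c g]
    rw [e₁, e₂] at key
    exact key
  have hbudℓ : c + ∑ i, π ℓ i * g ℓ i = b := rfl
  obtain ⟨t₁, hiff₁, heq₁, hlt₁⟩ := support_char (p ℓ) (π ℓ) (hp ℓ) (hπ ℓ) hover
    G G' hGder hG'pos hGanti b c (g ℓ) hc (fun i => hgnn ℓ i) hbudℓ hoptG
  -- the single-event problem
  have hoptV : ∀ c₁ : ℝ, ∀ h₁ : Fin (n ℓ) → ℝ, 0 ≤ c₁ → (∀ i, 0 ≤ h₁ i) →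
      c₁ + ∑ i, π ℓ i * h₁ i = 1 → (∀ i, 0 < c₁ + h₁ i) →
      ∑ i, p ℓ i * V (c₁ + h₁ i) ≤ ∑ i, p ℓ i * V (c₀ + h i) :=
    fun c₁ h₁ hc₁ hh₁ hb₁ hw₁ => hopt₀ c₁ h₁ ⟨hc₁, hh₁, hb₁, hw₁⟩
  obtain ⟨t₂, hiff₂, heq₂, hlt₂⟩ := support_char (p ℓ) (π ℓ) (hp ℓ) (hπ ℓ) hover
    V Vder hV.1 hV.2.1 hV.2.2 1 c₀ h hc₀ hhnn hbud₀ hoptV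
  -- uniqueness of the threshold support
  have hmem₁ : ∀ i, i ∈ univ.filter (fun i => 0 < g ℓ i) ↔ t₁ < p ℓ i / π ℓ i := by
    intro i; rw [Finset.mem_filter]; simp only [Finset.mem_univ, true_and]; exact hiff₁ i
  have hmem₂ : ∀ i, i ∈ univ.filter (fun i => 0 < h i) ↔ t₂ < p ℓ i / π ℓ i := by
    intro i; rw [Finset.mem_filter]; simp only [Finset.mem_univ, true_and]; exact hiff₂ i
  have hteq : t₁ = t₂ := by
    rcases lt_trichotomy t₁ t₂ with hlt | heq | hgt
    · exact absurd (support_unique_aux (p ℓ) (π ℓ) (hπ ℓ) _ _ t₂ t₁ hmem₂ hmem₁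
        heq₂ heq₁ hlt₁ hlt) (fun x => x)
    · exact heq
    · exact absurd (support_unique_aux (p ℓ) (π ℓ) (hπ ℓ) _ _ t₁ t₂ hmem₁ hmem₂
        heq₁ heq₂ hlt₂ hgt) (fun x => x)
  intro i
  rw [hiff₁ i, hiff₂ i, hteq]
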